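/- Let G be a finite simple graph, k a positive integer, and L ⊆ V(G) a set of vertices with |L| ≥ 2k+1. Then there exists a set L′ with L ⊆ L′ ⊆ V(G) such that |L′ ∖ L| ≤ (|L| − 2k − 1)·k and, for each connected component D of G − L′, it holds that |N_G(D)| ≤ |L| and N_G(D) is (2k,k)-unbreakable in G. -/

import Mathlib

open SimpleGraph

variable {V : Type*}

/-- The open neighbourhood `N_G(C)` of a vertex set `C`:
vertices outside `C` with a neighbour in `C`. -/
def setNbhd (G : SimpleGraph V) (C : Set V) : Set V :=
  {v | v ∉ C ∧ ∃ u ∈ C, G.Adj u v}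

/-- The closed neighbourhood `N_G[C] = C ∪ N_G(C)`. -/
def closedNbhd (G : SimpleGraph V) (C : Set V) : Set V :=
  C ∪ setNbhd G C

/-- `W` is `(q,k)`-unbreakable in the induced subgraph `G[U]`:
every separation `(A,B)` of `G[U]` of order at most `k` has
`|(A∖B) ∩ W| ≤ q` or `|(B∖A) ∩ W| ≤ q`. -/
def UnbreakableIn (G : SimpleGraph V) (U W : Set V) (q k : ℕ) : Prop :=
  ∀ A B : Set V, A ∪ B = U →
    (∀ a ∈ A \ B, ∀ b ∈ B \ A, ¬ G.Adj a b) →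
    (A ∩ B).ncard ≤ k →
    ((A \ B) ∩ W).ncard ≤ q ∨ ((B \ A) ∩ W).ncard ≤ q

/-- `W` is `(q,k)`-unbreakable in `G`. -/
def Unbreakable (G : SimpleGraph V) (W : Set V) (q k : ℕ) : Prop :=
  UnbreakableIn G Set.univ W q k

/-- `x` and `y` lie in the same connected component of `G − W`. -/
def ReachAvoid (G : SimpleGraph V) (W : Set V) (x y : V) : Prop :=
  ∃ (hx : x ∈ Wᶜ) (hy : y ∈ Wᶜ), (G.induce Wᶜ).Reachable ⟨x, hx⟩ ⟨y, hy⟩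

/-- `W` is an `X–Y` separator: no connected component of `G − W` contains
a vertex of `X∖W` and a vertex of `Y∖W`. -/
def IsSeparator (G : SimpleGraph V) (X Y W : Set V) : Prop :=
  ∀ x ∈ X \ W, ∀ y ∈ Y \ W, ¬ ReachAvoid G W x y

/-- `R_{G−W}(X∖W)`: the set of vertices reachable from `X∖W` in `G − W`. -/
def reachSet (G : SimpleGraph V) (W X : Set V) : Set V :=
  {y | ∃ x ∈ X \ W, ReachAvoid G W x y}

/-- `W` is an important `X–Y` separator. -/
def IsImportantSeparator (G : SimpleGraph V) (X Y W : Set V) : Prop :=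
  IsSeparator G X Y W ∧
  (∀ W' ⊆ W, IsSeparator G X Y W' → W' = W) ∧
  ∀ W' : Set V, IsSeparator G X Y W' → W'.ncard ≤ W.ncard →
    ¬ reachSet G W X ⊂ reachSet G W' X

/-- A chip (w.r.t. `G`, `k` and `S`): `G[C]` is connected, `|N_G(C)| ≤ 3k`,
and `N_G(C)` is an important `C–S` separator. -/
def IsChip (G : SimpleGraph V) (k : ℕ) (S C : Set V) : Prop :=
  (G.induce C).Connected ∧ (setNbhd G C).ncard ≤ 3 * k ∧
  IsImportantSeparator G C S (setNbhd G C)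

/-- The family of all inclusion-wise maximal chips. -/
def maximalChips (G : SimpleGraph V) (k : ℕ) (S : Set V) : Set (Set V) :=
  {C | IsChip G k S C ∧ ∀ C', IsChip G k S C' → C ⊆ C' → C' = C}

/-- Two vertex sets touch: they intersect or some edge joins them. -/
def Touches (G : SimpleGraph V) (C₁ C₂ : Set V) : Prop :=
  (C₁ ∩ C₂).Nonempty ∨ ∃ u ∈ C₁, ∃ v ∈ C₂, G.Adj u v

/-- `D` is a connected component of `G − A`: a maximal set disjoint from `A`
inducing a connected subgraph. -/
def IsCompOf (G : SimpleGraph V) (A D : Set V) : Prop :=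
  D ⊆ Aᶜ ∧ (G.induce D).Connected ∧
  ∀ D', D ⊆ D' → D' ⊆ Aᶜ → (G.induce D').Connected → D' = D

/-- The set `A = (⋂_{C ∈ 𝒞} V(G) ∖ N[C]) ∪ ⋃_{C ∈ 𝒞} N(C)` built from the
maximal chips (equals `V(G)` when there are no chips). -/
def chipBag (G : SimpleGraph V) (k : ℕ) (S : Set V) : Set V :=
  (⋂ C ∈ maximalChips G k S, (closedNbhd G C)ᶜ) ∪
    ⋃ C ∈ maximalChips G k S, setNbhd G C

/-- `η(k) = 3k·(3k·4^{3k}+1)`. -/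
def etaB (k : ℕ) : ℕ := 3 * k * (3 * k * 4 ^ (3 * k) + 1)

/-- `τ(k) = (3k)²·8^{3k} + 2k`. -/
def tauB (k : ℕ) : ℕ := (3 * k) ^ 2 * 8 ^ (3 * k) + 2 * k

/-- `τ′(k) = τ + (C(τ+k,2)·k + k)·k·η`. -/
def tauB' (k : ℕ) : ℕ :=
  tauB k + ((tauB k + k).choose 2 * k + k) * k * etaB k

/-- The tree graph determined by a parent function. -/
def parentGraph {T : Type*} (parent : T → T) : SimpleGraph T where
  Adj t s := t ≠ s ∧ (parent t = s ∨ parent s = t)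
  symm := ⟨fun t s h => ⟨h.1.symm, h.2.symm⟩⟩
  loopless := ⟨fun t h => h.1 rfl⟩

/-- The descendants of `t` (including `t` itself). -/
def descSet {T : Type*} (parent : T → T) (t : T) : Set T :=
  {u | ∃ n : ℕ, parent^[n] u = t}

/-- `γ(t) = ⋃_{u ⪯ t} β(u)`. -/
def gammaSet {T : Type*} (parent : T → T) (β : T → Set V) (t : T) : Set V :=
  ⋃ u ∈ descSet parent t, β u

/-- `σ(t) = ∅` for the root, `β(t) ∩ β(parent t)` otherwise. -/
def sigmaSet {T : Type*} [DecidableEq T] (root : T) (parent : T → T)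
    (β : T → Set V) (t : T) : Set V :=
  if t = root then ∅ else β t ∩ β (parent t)

/-- `(T,β)` (a rooted tree given by `root` and `parent`, with bags `β`)
is a tree decomposition of `G`. -/
structure IsTreeDecomp (G : SimpleGraph V) {T : Type*} (root : T) (parent : T → T)
    (β : T → Set V) : Prop where
  parent_root : parent root = root
  reaches_root : ∀ t : T, ∃ n : ℕ, parent^[n] t = root
  bags_connected : ∀ v : V, ((parentGraph parent).induce {t | v ∈ β t}).Connected
  edge_in_bag : ∀ u v : V, G.Adj u v → ∃ t : T, u ∈ β t ∧ v ∈ β t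

section Aux
variable {G : SimpleGraph V}

lemma walk_prop (P : V → Prop) {D : Set V}
    (hstep : ∀ u v : V, u ∈ D → v ∈ D → G.Adj u v → P u → P v)
    {a b : ↥D} (w : (G.induce D).Walk a b) (ha : P a) : P b := by
  induction w with
  | nil => exact ha
  | cons h p ih => exact ih (hstep _ _ (Subtype.mem _) (Subtype.mem _) h ha)

lemma connected_prop {D : Set V} (hconn : (G.induce D).Connected)
    (P : V → Prop) {x : V} (hx : x ∈ D) (hPx : P x)
    (hstep : ∀ u v : V, u ∈ D → v ∈ D → G.Adj u v → P u → P v) :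
    ∀ y ∈ D, P y := by
  intro y hy
  obtain ⟨w⟩ := hconn.preconnected ⟨x, hx⟩ ⟨y, hy⟩
  exact walk_prop P hstep w hPx

lemma connected_insert {D : Set V} (hconn : (G.induce D).Connected)
    {u v : V} (hu : u ∈ D) (huv : G.Adj u v) :
    (G.induce (insert v D)).Connected := by
  rw [SimpleGraph.connected_iff]
  have hsub : D ⊆ insert v D := Set.subset_insert _ _
  have hkey : ∀ c : ↥(insert v D), (G.induce (insert v D)).Reachable c ⟨u, hsub hu⟩ := by
    rintro ⟨c, hc⟩
    rcases hc with rfl | hc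
    · exact SimpleGraph.Adj.reachable (by exact huv.symm)
    · exact (hconn.preconnected ⟨c, hc⟩ ⟨u, hu⟩).map (G.induceHomOfLE hsub).toHom
  exact ⟨fun a b => (hkey a).trans (hkey b).symm, ⟨⟨v, Set.mem_insert _ _⟩⟩⟩

lemma IsCompOf.nbhd_sub {A D : Set V} (h : IsCompOf G A D) :
    setNbhd G D ⊆ A := by
  rintro v ⟨hvD, u, huD, huv⟩
  by_contra hvA
  have hins := connected_insert h.2.1 huD huv
  have heq := h.2.2 (insert v D) (Set.subset_insert _ _)
    (fun w hw => by rcases hw with rfl | hw; exact hvA; exact h.1 hw) hins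
  exact hvD (heq ▸ Set.mem_insert v D)

lemma comp_side {M W RA D : Set V}
    (hnbM : setNbhd G RA ⊆ M)
    (hMW : M ⊆ W) (hWM : W ∩ RA ⊆ M)
    (hD : IsCompOf G W D) (hDRA : D ⊆ RA) :
    IsCompOf G M D := by
  obtain ⟨⟨x, hx⟩⟩ := hD.2.1.nonempty
  refine ⟨fun d hd hM => hD.1 hd (hMW hM), hD.2.1, ?_⟩
  intro D' hsub hcompl hconn
  have hD'RA : D' ⊆ RA := by
    intro y hy
    refine connected_prop hconn (· ∈ RA) (hsub hx) (hDRA hx) ?_ y hy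
    intro u v hu hv huv hPu
    by_contra hvRA
    exact hcompl hv (hnbM ⟨hvRA, u, hPu, huv⟩)
  exact hD.2.2 D' hsub (fun d hd hdW => hcompl hd (hWM ⟨hdW, hD'RA hd⟩)) hconn

lemma comp_in_side {A B D : Set V} (hconn : (G.induce D).Connected)
    (hAB : A ∪ B = Set.univ)
    (hedge : ∀ a ∈ A \ B, ∀ b ∈ B \ A, ¬ G.Adj a b)
    (hDAB : D ∩ (A ∩ B) = ∅) :
    D ⊆ A \ B ∨ D ⊆ B \ A := by
  have hside : ∀ d ∈ D, d ∈ A \ B ∨ d ∈ B \ A := by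
    intro d hd
    have hdAB : d ∈ A ∪ B := by rw [hAB]; trivial
    by_cases hA : d ∈ A
    · by_cases hB : d ∈ B
      · exact absurd (Set.mem_inter hd (Set.mem_inter hA hB))
          (by rw [hDAB]; exact Set.notMem_empty d)
      · exact Or.inl ⟨hA, hB⟩
    · rcases hdAB with h | h
      · exact absurd h hA
      · exact Or.inr ⟨h, hA⟩
  obtain ⟨⟨x, hx⟩⟩ := hconn.nonempty
  have step : ∀ u v : V, u ∈ D → v ∈ D → G.Adj u v → u ∈ A \ B → v ∈ A \ B := by
    intro u v hu hv huv hPu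
    rcases hside v hv with h | h
    · exact h
    · exact absurd huv (hedge u hPu v h)
  have step' : ∀ u v : V, u ∈ D → v ∈ D → G.Adj u v → u ∈ B \ A → v ∈ B \ A := by
    intro u v hu hv huv hPu
    rcases hside v hv with h | h
    · exact absurd huv.symm (hedge v h u hPu)
    · exact h
  rcases hside x hx with h | h
  · exact Or.inl (fun y hy => connected_prop hconn (· ∈ A \ B) hx h step y hy)
  · exact Or.inr (fun y hy => connected_prop hconn (· ∈ B \ A) hx h step' y hy)

lemma side_nbhd_subset {R A B : Set V}
    (hAB : A ∪ B = Set.univ)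
    (hedge : ∀ a ∈ A \ B, ∀ b ∈ B \ A, ¬ G.Adj a b) :
    setNbhd G (R ∩ (A \ B)) ⊆ (setNbhd G R ∩ A) ∪ (A ∩ B ∩ R) := by
  rintro v ⟨hv, u, ⟨huR, huA, huB⟩, huv⟩
  have hvA : v ∈ A := by
    by_contra hvA
    have hvB : v ∈ B := by
      have h := Set.mem_univ v
      rw [← hAB] at h
      rcases h with h | h
      · exact absurd h hvA
      · exact h
    exact hedge u ⟨huA, huB⟩ v ⟨hvB, hvA⟩ huv
  by_cases hvR : v ∈ R
  · right
    refine ⟨⟨hvA, ?_⟩, hvR⟩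
    by_contra hvB
    exact hv ⟨hvR, hvA, hvB⟩
  · left
    exact ⟨⟨hvR, u, huR, huv⟩, hvA⟩

lemma lemA [Fintype V] (G : SimpleGraph V) (k : ℕ) (hk : 0 < k) :
    ∀ r : ℕ, ∀ L'' R : Set V, R ∩ L'' = ∅ → setNbhd G R ⊆ L'' →
      (setNbhd G R).ncard ≤ r →
      ∃ Z : Set V, Z ⊆ R ∧ Z.ncard ≤ (r - (2 * k + 1)) * k ∧
        ∀ D : Set V, IsCompOf G (L'' ∪ Z) D → D ⊆ R →
          (setNbhd G D).ncard ≤ r ∧ Unbreakable G (setNbhd G D) (2 * k) k := by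
  intro r
  induction r using Nat.strong_induction_on with
  | _ r IH =>
  intro L'' R hdisj hNR hcard
  by_cases hgood : ∀ D : Set V, IsCompOf G L'' D → D ⊆ R →
      Unbreakable G (setNbhd G D) (2 * k) k
  · refine ⟨∅, Set.empty_subset _, by simp, ?_⟩
    intro D hD hDR
    rw [Set.union_empty] at hD
    have h1 : setNbhd G D ⊆ setNbhd G R := by
      rintro v ⟨hvD, u, huD, huv⟩
      have hvL : v ∈ L'' := hD.nbhd_sub ⟨hvD, u, huD, huv⟩
      have hvR : v ∉ R := by
        intro hvR
        exact (Set.eq_empty_iff_forall_notMem.mp hdisj v) ⟨hvR, hvL⟩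
      exact ⟨hvR, u, hDR huD, huv⟩
    exact ⟨le_trans (Set.ncard_le_ncard h1 (Set.toFinite _)) hcard, hgood D hD hDR⟩
  · push_neg at hgood
    obtain ⟨D₀, hD₀, hD₀R, hbr⟩ := hgood
    unfold Unbreakable UnbreakableIn at hbr
    push_neg at hbr
    obtain ⟨A, B, hAB, hedge, hord, hbigA, hbigB⟩ := hbr
    set X := setNbhd G R with hX
    set N₀ := setNbhd G D₀ with hN₀
    -- N₀ ⊆ X
    have hN₀L : N₀ ⊆ L'' := hD₀.nbhd_sub
    have hN₀X : N₀ ⊆ X := by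
      rintro v hv
      obtain ⟨hvD, u, huD, huv⟩ := hv
      have hvR : v ∉ R := fun hvR =>
        (Set.eq_empty_iff_forall_notMem.mp hdisj v) ⟨hvR, hN₀L ⟨hvD, u, huD, huv⟩⟩
      exact ⟨hvR, u, hD₀R huD, huv⟩
    set S : Set V := A ∩ B ∩ R with hS
    set RA : Set V := R ∩ (A \ B) with hRA
    set RB : Set V := R ∩ (B \ A) with hRB
    have hedge' : ∀ a ∈ B \ A, ∀ b ∈ A \ B, ¬ G.Adj a b :=
      fun a ha b hb h => hedge b hb a ha h.symm
    have hAB' : B ∪ A = Set.univ := by rw [Set.union_comm]; exact hAB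
    have hSS : B ∩ A ∩ R = S := by rw [hS, Set.inter_comm B A]
    -- neighbourhood containments for both sides
    have hnbA : setNbhd G RA ⊆ (X ∩ A) ∪ S := side_nbhd_subset hAB hedge
    have hnbB : setNbhd G RB ⊆ (X ∩ B) ∪ S := by
      have := side_nbhd_subset (G := G) (R := R) hAB' hedge'
      rw [hSS] at this
      exact this
    -- cardinal facts
    have hXfin : X.Finite := Set.toFinite _
    have fA1 : (X ∩ A).ncard + (X ∩ (B \ A)).ncard ≤ r := by
      have hdis : Disjoint (X ∩ A) (X ∩ (B \ A)) := by
        rw [Set.disjoint_left]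
        rintro a ⟨_, haA⟩ ⟨_, _, haA'⟩
        exact haA' haA
      have hun : (X ∩ A) ∪ (X ∩ (B \ A)) ⊆ X := by
        rintro a (h | h) <;> exact h.1
      calc (X ∩ A).ncard + (X ∩ (B \ A)).ncard
          = ((X ∩ A) ∪ (X ∩ (B \ A))).ncard := (Set.ncard_union_eq hdis).symm
        _ ≤ X.ncard := Set.ncard_le_ncard hun hXfin
        _ ≤ r := hcard
    have fB1 : (X ∩ B).ncard + (X ∩ (A \ B)).ncard ≤ r := by
      have hdis : Disjoint (X ∩ B) (X ∩ (A \ B)) := by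
        rw [Set.disjoint_left]
        rintro a ⟨_, haB⟩ ⟨_, _, haB'⟩
        exact haB' haB
      have hun : (X ∩ B) ∪ (X ∩ (A \ B)) ⊆ X := by
        rintro a (h | h) <;> exact h.1
      calc (X ∩ B).ncard + (X ∩ (A \ B)).ncard
          = ((X ∩ B) ∪ (X ∩ (A \ B))).ncard := (Set.ncard_union_eq hdis).symm
        _ ≤ X.ncard := Set.ncard_le_ncard hun hXfin
        _ ≤ r := hcard
    have hbigA' : 2 * k + 1 ≤ (X ∩ (A \ B)).ncard := by
      have hsub : (A \ B) ∩ N₀ ⊆ X ∩ (A \ B) := by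
        rintro a ⟨h1, h2⟩
        exact ⟨hN₀X h2, h1⟩
      have := Set.ncard_le_ncard hsub (Set.toFinite _)
      omega
    have hbigB' : 2 * k + 1 ≤ (X ∩ (B \ A)).ncard := by
      have hsub : (B \ A) ∩ N₀ ⊆ X ∩ (B \ A) := by
        rintro a ⟨h1, h2⟩
        exact ⟨hN₀X h2, h1⟩
      have := Set.ncard_le_ncard hsub (Set.toFinite _)
      omega
    have f5 : S.ncard + (X ∩ (A ∩ B)).ncard ≤ k := by
      have hdis : Disjoint S (X ∩ (A ∩ B)) := by
        rw [Set.disjoint_left]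
        rintro a ⟨_, haR⟩ ⟨haX, _⟩
        exact haX.1 haR
      have hun : S ∪ (X ∩ (A ∩ B)) ⊆ A ∩ B := by
        rintro a (h | h)
        · exact h.1
        · exact h.2
      calc S.ncard + (X ∩ (A ∩ B)).ncard
          = (S ∪ (X ∩ (A ∩ B))).ncard := (Set.ncard_union_eq hdis).symm
        _ ≤ (A ∩ B).ncard := Set.ncard_le_ncard hun (Set.toFinite _)
        _ ≤ k := hord
    have f6 : X.ncard + (X ∩ (A ∩ B)).ncard = (X ∩ A).ncard + (X ∩ B).ncard := by
      have h1 : (X ∩ A) ∪ (X ∩ B) = X := by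
        rw [← Set.inter_union_distrib_left, hAB, Set.inter_univ]
      have h2 : (X ∩ A) ∩ (X ∩ B) = X ∩ (A ∩ B) := by
        ext x; simp only [Set.mem_inter_iff]; tauto
      have := Set.ncard_union_add_ncard_inter (X ∩ A) (X ∩ B) (Set.toFinite _) (Set.toFinite _)
      rw [h1, h2] at this
      exact this
    have f9 : (X ∩ (A \ B)).ncard ≤ (X ∩ A).ncard :=
      Set.ncard_le_ncard (fun a ⟨h1, h2⟩ => ⟨h1, h2.1⟩) (Set.toFinite _)
    have f10 : (X ∩ (B \ A)).ncard ≤ (X ∩ B).ncard :=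
      Set.ncard_le_ncard (fun a ⟨h1, h2⟩ => ⟨h1, h2.1⟩) (Set.toFinite _)
    set rA : ℕ := (setNbhd G RA).ncard with hrAdef
    set rB : ℕ := (setNbhd G RB).ncard with hrBdef
    have f3 : rA ≤ (X ∩ A).ncard + S.ncard :=
      le_trans (Set.ncard_le_ncard hnbA (Set.toFinite _)) (Set.ncard_union_le _ _)
    have f4 : rB ≤ (X ∩ B).ncard + S.ncard :=
      le_trans (Set.ncard_le_ncard hnbB (Set.toFinite _)) (Set.ncard_union_le _ _)
    have hrAlt : rA < r := by omega
    have hrBlt : rB < r := by omega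
    have hSk : S.ncard ≤ k := by omega
    have hsum : (rA - (2 * k + 1)) + (rB - (2 * k + 1)) + 1 ≤ r - (2 * k + 1) := by omega
    -- apply IH on both sides
    have hdisjA : RA ∩ (L'' ∪ S) = ∅ := by
      rw [Set.eq_empty_iff_forall_notMem]
      rintro a ⟨⟨haR, haA, haB⟩, h | h⟩
      · exact (Set.eq_empty_iff_forall_notMem.mp hdisj a) ⟨haR, h⟩
      · exact haB h.1.2
    have hdisjB : RB ∩ (L'' ∪ S) = ∅ := by
      rw [Set.eq_empty_iff_forall_notMem]
      rintro a ⟨⟨haR, haB, haA⟩, h | h⟩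
      · exact (Set.eq_empty_iff_forall_notMem.mp hdisj a) ⟨haR, h⟩
      · exact haA h.1.1
    have hnbA' : setNbhd G RA ⊆ L'' ∪ S := by
      intro v hv
      rcases hnbA hv with h | h
      · exact Or.inl (hNR h.1)
      · exact Or.inr h
    have hnbB' : setNbhd G RB ⊆ L'' ∪ S := by
      intro v hv
      rcases hnbB hv with h | h
      · exact Or.inl (hNR h.1)
      · exact Or.inr h
    obtain ⟨ZA, hZAsub, hZAcard, hZAprop⟩ := IH rA hrAlt (L'' ∪ S) RA hdisjA hnbA' le_rfl
    obtain ⟨ZB, hZBsub, hZBcard, hZBprop⟩ := IH rB hrBlt (L'' ∪ S) RB hdisjB hnbB' le_rfl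
    refine ⟨S ∪ ZA ∪ ZB, ?_, ?_, ?_⟩
    · rintro a ((h | h) | h)
      · exact h.2
      · exact (hZAsub h).1
      · exact (hZBsub h).1
    · -- cardinality bound
      have h1 : (S ∪ ZA ∪ ZB).ncard ≤ S.ncard + ZA.ncard + ZB.ncard :=
        le_trans (Set.ncard_union_le _ _)
          (by have := Set.ncard_union_le S ZA; omega)
      have h2 : S.ncard + ZA.ncard + ZB.ncard ≤
          k + (rA - (2 * k + 1)) * k + (rB - (2 * k + 1)) * k := by omega
      have h3 : k + (rA - (2 * k + 1)) * k + (rB - (2 * k + 1)) * k =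
          (1 + (rA - (2 * k + 1)) + (rB - (2 * k + 1))) * k := by ring
      have h4 : (1 + (rA - (2 * k + 1)) + (rB - (2 * k + 1))) * k ≤
          (r - (2 * k + 1)) * k := Nat.mul_le_mul_right k (by omega)
      omega
    · intro D hD hDR
      set Z : Set V := S ∪ ZA ∪ ZB with hZ
      have hDcompl := hD.1
      -- D avoids A ∩ B
      have hDAB : D ∩ (A ∩ B) = ∅ := by
        rw [Set.eq_empty_iff_forall_notMem]
        rintro d ⟨hdD, hdAB⟩
        exact hDcompl hdD (Or.inr (Or.inl (Or.inl ⟨hdAB, hDR hdD⟩)))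
      rcases comp_in_side hD.2.1 hAB hedge hDAB with hside | hside
      · -- D ⊆ RA
        have hDRA : D ⊆ RA := fun d hd => ⟨hDR hd, hside hd⟩
        have hMW : (L'' ∪ S) ∪ ZA ⊆ L'' ∪ Z := by
          rintro a ((h | h) | h)
          · exact Or.inl h
          · exact Or.inr (Or.inl (Or.inl h))
          · exact Or.inr (Or.inl (Or.inr h))
        have hWM : (L'' ∪ Z) ∩ RA ⊆ (L'' ∪ S) ∪ ZA := by
          rintro a ⟨h | ((h | h) | h), haRA⟩
          · exact Or.inl (Or.inl h)
          · exact Or.inl (Or.inr h)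
          · exact Or.inr h
          · exact absurd (hZBsub h).2.1 haRA.2.2
        have hcomp : IsCompOf G ((L'' ∪ S) ∪ ZA) D := by
          refine comp_side ?_ hMW hWM hD hDRA
          intro v hv
          exact Or.inl (hnbA' hv)
        obtain ⟨hle, hub⟩ := hZAprop D hcomp hDRA
        exact ⟨le_trans hle (le_of_lt hrAlt), hub⟩
      · -- D ⊆ RB
        have hDRB : D ⊆ RB := fun d hd => ⟨hDR hd, hside hd⟩
        have hMW : (L'' ∪ S) ∪ ZB ⊆ L'' ∪ Z := by
          rintro a ((h | h) | h)
          · exact Or.inl h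
          · exact Or.inr (Or.inl (Or.inl h))
          · exact Or.inr (Or.inr h)
        have hWM : (L'' ∪ Z) ∩ RB ⊆ (L'' ∪ S) ∪ ZB := by
          rintro a ⟨h | ((h | h) | h), haRB⟩
          · exact Or.inl (Or.inl h)
          · exact Or.inl (Or.inr h)
          · exact absurd (hZAsub h).2 (fun hh => haRB.2.2 hh.1)
          · exact Or.inr h
        have hcomp : IsCompOf G ((L'' ∪ S) ∪ ZB) D := by
          refine comp_side ?_ hMW hWM hD hDRB
          intro v hv
          exact Or.inl (hnbB' hv)
        obtain ⟨hle, hub⟩ := hZBprop D hcomp hDRB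
        exact ⟨le_trans hle (le_of_lt hrBlt), hub⟩

end Aux

/-- strengthening unbreakability of adhesions
(Lemma `breaking-neighbourhood`). -/
theorem strengthen_neighbourhoods {V : Type*} [Fintype V] [DecidableEq V]
    (G : SimpleGraph V) (k : ℕ) (hk : 0 < k) (L : Set V)
    (hL : 2 * k + 1 ≤ L.ncard) :
    ∃ L' : Set V, L ⊆ L' ∧
      (L' \ L).ncard ≤ (L.ncard - 2 * k - 1) * k ∧
      ∀ D : Set V, IsCompOf G L' D →
        (setNbhd G D).ncard ≤ L.ncard ∧
        Unbreakable G (setNbhd G D) (2 * k) k := by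
  have hdisj : Lᶜ ∩ L = ∅ := Set.compl_inter_self L
  have hnb : setNbhd G Lᶜ ⊆ L := by
    rintro v ⟨hv, -⟩
    simpa using hv
  have hcard : (setNbhd G Lᶜ).ncard ≤ L.ncard := Set.ncard_le_ncard hnb (Set.toFinite _)
  obtain ⟨Z, hZsub, hZcard, hZprop⟩ := lemA G k hk L.ncard L Lᶜ hdisj hnb hcard
  refine ⟨L ∪ Z, Set.subset_union_left, ?_, ?_⟩
  · have h1 : (L ∪ Z) \ L ⊆ Z := by
      rintro a ⟨h | h, haL⟩
      · exact absurd h haL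
      · exact h
    have h2 : L.ncard - 2 * k - 1 = L.ncard - (2 * k + 1) := by omega
    rw [h2]
    exact le_trans (Set.ncard_le_ncard h1 (Set.toFinite _)) hZcard
  · intro D hD
    have hDR : D ⊆ Lᶜ := fun d hd hdL => hD.1 hd (Or.inl hdL)
    exact hZprop D hD hDR
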